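/- Let w, m ≥ 1 and k ≥ 0 be integers with k < m, and let 0 < γ ≤ 1/9. Let A, B be w×w real matrices with ‖A‖ ≤ 1 and ‖B‖ ≤ 1 (ℓ∞ operator norm). Let X be a finite nonempty set, and for each 0 ≤ i ≤ k let Y_i be a finite nonempty set and 𝒜_i, ℬ_i : X × Y_i → ℝ^{w×w} be functions satisfying: (a) ‖𝒜_i(x,y)‖ ≤ C(m−1,i) and ‖ℬ_i(x,y)‖ ≤ C(m−1,i) for all x, y; (b) E_{x∈X}[‖E_{y∈Y_i}[𝒜_i(x,y)] − A‖] ≤ γ^{i+1} and E_{x∈X}[‖E_{y∈Y_i}[ℬ_i(x,y)] − B‖] ≤ γ^{i+1}. For each 0 ≤ i ≤ ⌈k/2⌉ let g_i : X × D_i → X × Y_i and h_i : X × D_i' → X × Y_i be (ε_i, δ)-averaging samplers (D_i, D_i' finite nonempty sets), where ε_i ≤ γ^{i+1}/(w·C(m−1,i)) and δ ≤ γ^{k+1}/(w²·C(2m−1,k)). For x ∈ X and 0 ≤ i ≤ k define A_{x,i} := E_{a∈D_i}[𝒜_i(g_i(x,a))] if i ≤ ⌈k/2⌉ and A_{x,i}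 := E_{y∈Y_i}[𝒜_i(x,y)] if i > ⌈k/2⌉; define B_{x,j} := E_{b∈D_j'}[ℬ_j(h_j(x,b))] if j ≤ ⌈k/2⌉ and B_{x,j} := E_{y∈Y_j}[ℬ_j(x,y)] if j > ⌈k/2⌉. Define C_k(x) := Σ_{i+j=k} A_{x,i}·B_{x,j} − Σ_{i+j=k−1} A_{x,i}·B_{x,j}. Then E_{x∈X}[‖C_k(x) − A·B‖] ≤ (33γ)^{k+1}. -/

import Mathlib

attribute [local instance] Matrix.linftyOpNormedRing

/-- The uniform average `E_{t∈T}[f t]` over a finite type `T`. -/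
noncomputable def expectation {T : Type*} [Fintype T] (f : T → ℝ) : ℝ :=
  (∑ t, f t) / (Fintype.card T : ℝ)

/-- The uniform average `⟨𝒜⟩ = E_{t∈T}[𝒜 t]` of a matrix-valued function. -/
noncomputable def mexpect {T : Type*} [Fintype T] {w : ℕ}
    (A : T → Matrix (Fin w) (Fin w) ℝ) : Matrix (Fin w) (Fin w) ℝ :=
  (Fintype.card T : ℝ)⁻¹ • ∑ t, A t

/-- The weight `μ(𝒜) = max_{t∈T} ‖𝒜 t‖` (ℓ∞ operator norm). -/
noncomputable def weight {T : Type*} [Fintype T] [Nonempty T] {w : ℕ}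
    (A : T → Matrix (Fin w) (Fin w) ℝ) : ℝ :=
  Finset.univ.sup' Finset.univ_nonempty (fun t => ‖A t‖)

/-- `g : X × S → T` is an `(ε,δ)`-averaging sampler. -/
def IsAvgSampler {X S T : Type*} [Fintype X] [Fintype S] [Fintype T]
    (ε δ : ℝ) (g : X → S → T) : Prop :=
  ∀ f : T → ℝ, (∀ t, f t ∈ Set.Icc (0 : ℝ) 1) →
    (1 - δ) * (Fintype.card X : ℝ) ≤
      ((Finset.univ.filter fun x : X =>
        |expectation (fun s => f (g x s)) - expectation f| ≤ ε).card : ℝ)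

attribute [local instance] Matrix.linftyOpNormedSpace

set_option linter.unusedSectionVars false
set_option linter.unusedVariables false
set_option maxHeartbeats 2000000

section helpers
variable {T : Type*} [Fintype T] [Nonempty T] {w : ℕ}

lemma card_pos' : (0:ℝ) < (Fintype.card T : ℝ) := by exact_mod_cast Fintype.card_pos

lemma exp_le {f : T → ℝ} {c : ℝ} (h : ∀ t, f t ≤ c) : expectation f ≤ c := by
  rw [expectation, div_le_iff₀ (card_pos' (T := T))]
  calc ∑ t, f t ≤ ∑ _t : T, c := Finset.sum_le_sum fun t _ => h t
    _ = c * (Fintype.card T : ℝ) := by simp [mul_comm]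

lemma exp_nonneg {f : T → ℝ} (h : ∀ t, 0 ≤ f t) : 0 ≤ expectation f :=
  div_nonneg (Finset.sum_nonneg fun t _ => h t) (le_of_lt (card_pos' (T := T)))

lemma exp_mono {f g : T → ℝ} (h : ∀ t, f t ≤ g t) : expectation f ≤ expectation g := by
  unfold expectation
  have h1 := Finset.sum_le_sum (fun t (_ : t ∈ Finset.univ) => h t)
  exact (div_le_div_iff_of_pos_right (card_pos' (T := T))).mpr h1

lemma exp_add (f g : T → ℝ) :
    expectation (fun t => f t + g t) = expectation f + expectation g := by
  unfold expectation; rw [Finset.sum_add_distrib, add_div]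

lemma exp_sum {ι : Type*} (s : Finset ι) (F : ι → T → ℝ) :
    expectation (fun t => ∑ i ∈ s, F i t) = ∑ i ∈ s, expectation (F i) := by
  unfold expectation; rw [Finset.sum_comm, Finset.sum_div]

lemma exp_affine (f : T → ℝ) (c d : ℝ) (hd : d ≠ 0) :
    expectation (fun t => (f t + c) / d) = (expectation f + c) / d := by
  unfold expectation
  have hn : (Fintype.card T : ℝ) ≠ 0 := ne_of_gt (card_pos' (T := T))
  have h1 : (∑ t : T, (f t + c) / d) = ((∑ t : T, f t) + (Fintype.card T : ℝ) * c) / d := by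
    rw [← Finset.sum_div, Finset.sum_add_distrib, Finset.sum_const, Finset.card_univ,
      nsmul_eq_mul]
  beta_reduce
  rw [h1]
  field_simp

lemma mexpect_entry (f : T → Matrix (Fin w) (Fin w) ℝ) (p q : Fin w) :
    mexpect f p q = expectation (fun t => f t p q) := by
  unfold mexpect expectation
  rw [div_eq_inv_mul]
  simp [Matrix.smul_apply, Matrix.sum_apply, smul_eq_mul]

lemma mexpect_const (M : Matrix (Fin w) (Fin w) ℝ) :
    mexpect (fun _ : T => M) = M := by
  unfold mexpect
  rw [Finset.sum_const, ← Nat.cast_smul_eq_nsmul ℝ, smul_smul, Finset.card_univ,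
    inv_mul_cancel₀ (ne_of_gt (card_pos' (T := T))), one_smul]

lemma norm_mexpect_le (f : T → Matrix (Fin w) (Fin w) ℝ) :
    ‖mexpect f‖ ≤ expectation (fun t => ‖f t‖) := by
  unfold mexpect expectation
  rw [div_eq_inv_mul, norm_smul]
  have h1 : ‖((Fintype.card T : ℝ))⁻¹‖ = (Fintype.card T : ℝ)⁻¹ := by
    rw [Real.norm_eq_abs, abs_of_nonneg]; positivity
  rw [h1]
  have h2 : (0:ℝ) ≤ ((Fintype.card T : ℝ))⁻¹ := by positivity
  exact mul_le_mul_of_nonneg_left (norm_sum_le _ _) h2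

lemma mexpect_sub (f g : T → Matrix (Fin w) (Fin w) ℝ) :
    mexpect (fun t => f t - g t) = mexpect f - mexpect g := by
  unfold mexpect
  rw [Finset.sum_sub_distrib, smul_sub]

lemma norm_mexpect_sub_le (f : T → Matrix (Fin w) (Fin w) ℝ) (M : Matrix (Fin w) (Fin w) ℝ) :
    ‖mexpect f - M‖ ≤ expectation (fun t => ‖f t - M‖) := by
  have h1 : mexpect f - M = mexpect (fun t => f t - M) := by
    rw [mexpect_sub, mexpect_const]
  rw [h1]
  exact norm_mexpect_le _

lemma norm_mexpect_le_of_bound {f : T → Matrix (Fin w) (Fin w) ℝ} {C : ℝ}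
    (h : ∀ t, ‖f t‖ ≤ C) : ‖mexpect f‖ ≤ C :=
  (norm_mexpect_le f).trans (exp_le h)

lemma entry_abs_le_norm (M : Matrix (Fin w) (Fin w) ℝ) (p q : Fin w) :
    |M p q| ≤ ‖M‖ := by
  have h : ‖M p q‖₊ ≤ ‖M‖₊ := by
    rw [Matrix.linfty_opNNNorm_def]
    exact le_trans
      (Finset.single_le_sum (f := fun j => ‖M p j‖₊) (fun _ _ => zero_le) (Finset.mem_univ q))
      (Finset.le_sup (f := fun i => ∑ j : Fin w, ‖M i j‖₊) (Finset.mem_univ p))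
  calc |M p q| = ‖M p q‖ := (Real.norm_eq_abs _).symm
    _ ≤ ‖M‖ := by exact_mod_cast h

lemma norm_le_of_entries {M : Matrix (Fin w) (Fin w) ℝ} {c : ℝ} (hc : 0 ≤ c)
    (h : ∀ p q, |M p q| ≤ c) : ‖M‖ ≤ w * c := by
  have hwc : (0:ℝ) ≤ w * c := by positivity
  have key : (Finset.univ.sup fun i => ∑ j : Fin w, ‖M i j‖₊) ≤ (⟨w * c, hwc⟩ : NNReal) := by
    apply Finset.sup_le
    intro p _
    apply NNReal.coe_le_coe.mp
    push_cast
    calc ∑ j, ‖M p j‖ ≤ ∑ _j : Fin w, c := by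
          refine Finset.sum_le_sum fun j _ => ?_
          rw [Real.norm_eq_abs]; exact h p j
      _ = w * c := by simp [mul_comm]
  calc ‖M‖ = _ := Matrix.linfty_opNorm_def M
    _ ≤ ((⟨w * c, hwc⟩ : NNReal) : ℝ) := NNReal.coe_le_coe.mpr key
    _ = w * c := rfl
lemma mexpect_prod {X Y : Type*} [Fintype X] [Fintype Y] [Nonempty X] [Nonempty Y]
    (F : X × Y → Matrix (Fin w) (Fin w) ℝ) :
    mexpect F = mexpect (fun x : X => mexpect (fun y : Y => F (x, y))) := by
  unfold mexpect
  rw [Fintype.card_prod, Fintype.sum_prod_type, Finset.smul_sum]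
  simp only [Nat.cast_mul, mul_inv, mul_smul]
  rw [Finset.smul_sum]

end helpers

section main
open Finset

lemma exp_const {T : Type*} [Fintype T] [Nonempty T] (c : ℝ) :
    expectation (fun _ : T => c) = c := by
  unfold expectation
  rw [Finset.sum_const, Finset.card_univ, nsmul_eq_mul]
  field_simp

lemma union_bound {X ι : Type*} [Fintype X] [Fintype ι] (δ : ℝ)
    (P : ι → X → Prop) [∀ i x, Decidable (P i x)]
    (h : ∀ i, (1 - δ) * (Fintype.card X : ℝ) ≤ ((univ.filter fun x => P i x).card : ℝ)) :
    (1 - (Fintype.card ι : ℝ) * δ) * (Fintype.card X : ℝ) ≤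
      ((univ.filter fun x => ∀ i, P i x).card : ℝ) := by
  classical
  have hsub : (univ.filter fun x : X => ¬ ∀ i, P i x) ⊆
      univ.biUnion fun i : ι => univ.filter fun x => ¬ P i x := by
    intro x hx
    simp only [mem_filter, mem_univ, true_and, not_forall] at hx
    obtain ⟨i, hi⟩ := hx
    simp only [mem_biUnion, mem_filter, mem_univ, true_and]
    exact ⟨i, hi⟩
  have h1 : ((univ.filter fun x : X => ¬ ∀ i, P i x).card : ℝ) ≤
      ∑ i : ι, ((univ.filter fun x : X => ¬ P i x).card : ℝ) := by
    exact_mod_cast (card_le_card hsub).trans card_biUnion_le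
  have h2 : ∀ i : ι, ((univ.filter fun x : X => ¬ P i x).card : ℝ) ≤
      δ * (Fintype.card X : ℝ) := by
    intro i
    have hc := card_filter_add_card_filter_not (s := (univ : Finset X))
      (p := fun x => P i x)
    have hc' : ((univ.filter fun x : X => P i x).card : ℝ)
        + ((univ.filter fun x : X => ¬ P i x).card : ℝ) = (Fintype.card X : ℝ) := by
      rw [← Finset.card_univ]; exact_mod_cast hc
    have := h i
    nlinarith [this, hc']
  have h3 : ∑ i : ι, ((univ.filter fun x : X => ¬ P i x).card : ℝ) ≤
      (Fintype.card ι : ℝ) * (δ * (Fintype.card X : ℝ)) := by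
    calc ∑ i : ι, ((univ.filter fun x : X => ¬ P i x).card : ℝ)
        ≤ ∑ _i : ι, δ * (Fintype.card X : ℝ) := Finset.sum_le_sum fun i _ => h2 i
      _ = (Fintype.card ι : ℝ) * (δ * (Fintype.card X : ℝ)) := by
          rw [Finset.sum_const, Finset.card_univ, nsmul_eq_mul]
  have hc2 := card_filter_add_card_filter_not (s := (univ : Finset X))
    (p := fun x => ∀ i, P i x)
  have hc2' : ((univ.filter fun x : X => ∀ i, P i x).card : ℝ)
      + ((univ.filter fun x : X => ¬ ∀ i, P i x).card : ℝ) = (Fintype.card X : ℝ) := by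
    rw [← Finset.card_univ]; exact_mod_cast hc2
  nlinarith [h1, h3, hc2']

lemma pair_exp {X : Type*} [Fintype X] [Nonempty X] (u v : X → ℝ) (U V s t β : ℝ)
    (hu0 : ∀ x, 0 ≤ u x) (hv0 : ∀ x, 0 ≤ v x) (hU : ∀ x, u x ≤ U) (hV : ∀ x, v x ≤ V)
    (hs : 0 ≤ s) (hU0 : 0 ≤ U) (hV0 : 0 ≤ V)
    (G : Finset X) (hG : (1 - β) * (Fintype.card X : ℝ) ≤ (G.card : ℝ))
    (hGs : ∀ x ∈ G, u x ≤ s) (ht : expectation v ≤ t) :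
    expectation (fun x => u x * v x) ≤ s * t + β * (U * V) := by
  classical
  have hNpos : (0:ℝ) < (Fintype.card X : ℝ) := card_pos' (T := X)
  have hsplit : ∑ x : X, u x * v x = ∑ x ∈ G, u x * v x + ∑ x ∈ Gᶜ, u x * v x :=
    (Finset.sum_add_sum_compl G _).symm
  have hGbound : ∑ x ∈ G, u x * v x ≤ s * ∑ x : X, v x := by
    calc ∑ x ∈ G, u x * v x ≤ ∑ x ∈ G, s * v x :=
          Finset.sum_le_sum fun x hx => mul_le_mul_of_nonneg_right (hGs x hx) (hv0 x)
      _ = s * ∑ x ∈ G, v x := by rw [Finset.mul_sum]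
      _ ≤ s * ∑ x : X, v x := by
          apply mul_le_mul_of_nonneg_left ?_ hs
          exact Finset.sum_le_sum_of_subset_of_nonneg (Finset.subset_univ G)
            (fun x _ _ => hv0 x)
  have hcompl : ((Gᶜ : Finset X).card : ℝ) ≤ β * (Fintype.card X : ℝ) := by
    have : (Gᶜ : Finset X).card = Fintype.card X - G.card := Finset.card_compl G
    have hle : G.card ≤ Fintype.card X := Finset.card_le_univ G
    have : ((Gᶜ : Finset X).card : ℝ) = (Fintype.card X : ℝ) - (G.card : ℝ) := by
      rw [this]; push_cast [Nat.cast_sub hle]; ring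
    nlinarith [hG]
  have hCbound : ∑ x ∈ Gᶜ, u x * v x ≤ ((Gᶜ : Finset X).card : ℝ) * (U * V) := by
    calc ∑ x ∈ Gᶜ, u x * v x ≤ ∑ _x ∈ Gᶜ, U * V := Finset.sum_le_sum fun x _ =>
          mul_le_mul (hU x) (hV x) (hv0 x) hU0
      _ = ((Gᶜ : Finset X).card : ℝ) * (U * V) := by
          rw [Finset.sum_const, nsmul_eq_mul]
  have hEv : expectation v ≤ t := ht
  have hUV0 : (0:ℝ) ≤ U * V := mul_nonneg hU0 hV0
  have hsum : ∑ x : X, u x * v x ≤ s * ∑ x : X, v x + β * (Fintype.card X : ℝ) * (U * V) := by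
    have := hCbound.trans (mul_le_mul_of_nonneg_right hcompl hUV0)
    linarith [hGbound, this, hsplit.le, hsplit.ge]
  have : expectation (fun x => u x * v x) ≤ s * expectation v + β * (U * V) := by
    unfold expectation
    rw [div_le_iff₀ hNpos] at *
    calc (∑ x : X, u x * v x) ≤ s * ∑ x : X, v x + β * (Fintype.card X : ℝ) * (U * V) := hsum
      _ = (s * ((∑ x : X, v x) / (Fintype.card X : ℝ)) + β * (U * V)) * (Fintype.card X : ℝ) := by
          field_simp
  refine this.trans ?_
  have : s * expectation v ≤ s * t := mul_le_mul_of_nonneg_left hEv hs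
  linarith

lemma choose_le_of_le_half {n s t : ℕ} (hst : s ≤ t) (ht : t ≤ n / 2) :
    n.choose s ≤ n.choose t := by
  induction t with
  | zero => simp [Nat.le_zero.mp hst]
  | succ t ih =>
    rcases Nat.lt_or_ge s (t + 1) with hlt | hge
    · have ht' : t < n / 2 := lt_of_lt_of_le (Nat.lt_succ_self t) ht
      exact le_trans (ih (Nat.lt_succ_iff.mp hlt) (le_of_lt ht'))
        (Nat.choose_le_succ_of_lt_half_left ht')
    · have : s = t + 1 := le_antisymm hst hge
      subst this; exact le_rfl

lemma nat38 (k : ℕ) : (38 * k + 29 : ℕ) ≤ 33 ^ (k + 1) := by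
  induction k with
  | zero => norm_num
  | succ k ih =>
    have h3 : 33 ^ (k + 2) = 33 * 33 ^ (k + 1) := by ring
    have h4 : 33 * (38 * k + 29) ≤ 33 * 33 ^ (k + 1) := Nat.mul_le_mul_left _ ih
    omega

end main

section sampler
open Finset

lemma sampler_eps_nonneg {X S T' : Type*} [Fintype X] [Nonempty X] [Fintype S] [Fintype T']
    {ε δ : ℝ} {g : X → S → T'} (hg : IsAvgSampler ε δ g) (hδ : δ < 1) : 0 ≤ ε := by
  by_contra hcon
  push_neg at hcon
  have h0 := hg (fun _ => 0) (fun t => ⟨le_rfl, zero_le_one⟩)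
  have he : expectation (fun _ : T' => (0:ℝ)) = 0 := by
    unfold expectation; simp
  have he2 : ∀ x : X, expectation (fun _ : S => (0:ℝ)) = 0 := by
    intro x; unfold expectation; simp
  have : (univ.filter fun x : X =>
      |expectation (fun s : S => (0:ℝ)) - expectation (fun _ : T' => (0:ℝ))| ≤ ε) = ∅ := by
    apply Finset.filter_false_of_mem
    intro x _
    rw [he, he2 x]
    simp only [sub_zero, abs_zero, not_le]
    exact hcon
  rw [this] at h0
  simp only [Finset.card_empty, Nat.cast_zero] at h0
  have hX : (0:ℝ) < (Fintype.card X : ℝ) := card_pos' (T := X)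
  nlinarith

lemma sampler_conc {X S T' : Type*} [Fintype X] [Nonempty X] [Fintype S] [Nonempty S]
    [Fintype T'] [Nonempty T'] {w : ℕ} (ε δ C : ℝ) (hC : 0 < C) (hε : 0 ≤ ε)
    (g : X → S → T') (hg : IsAvgSampler ε δ g)
    (F : T' → Matrix (Fin w) (Fin w) ℝ) (hF : ∀ t, ‖F t‖ ≤ C) :
    (1 - (w:ℝ)^2 * δ) * (Fintype.card X : ℝ) ≤
      ((univ.filter fun x : X =>
        ‖mexpect (fun s => F (g x s)) - mexpect F‖ ≤ 2*C*(w:ℝ)*ε).card : ℝ) := by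
  classical
  have h2C : (0:ℝ) < 2*C := by linarith
  set P : Fin w × Fin w → X → Prop := fun pq x =>
    |expectation (fun s => F (g x s) pq.1 pq.2) - expectation (fun t => F t pq.1 pq.2)| ≤ 2*C*ε
    with hP_def
  have hP : ∀ pq, (1 - δ) * (Fintype.card X : ℝ) ≤ ((univ.filter fun x => P pq x).card : ℝ) := by
    intro pq
    set f : T' → ℝ := fun t => (F t pq.1 pq.2 + C) / (2*C) with hf_def
    have hf : ∀ t, f t ∈ Set.Icc (0:ℝ) 1 := by
      intro t
      have h1 : |F t pq.1 pq.2| ≤ C := (entry_abs_le_norm _ _ _).trans (hF t)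
      rw [abs_le] at h1
      constructor
      · apply div_nonneg _ h2C.le; linarith [h1.1]
      · rw [div_le_one h2C]; linarith [h1.2]
    have hsamp := hg f hf
    have hiff : ∀ x : X, (|expectation (fun s => f (g x s)) - expectation f| ≤ ε) ↔ P pq x := by
      intro x
      have e1 : expectation (fun s => f (g x s))
          = (expectation (fun s => F (g x s) pq.1 pq.2) + C) / (2*C) :=
        exp_affine _ C (2*C) (ne_of_gt h2C)
      have e2 : expectation f = (expectation (fun t => F t pq.1 pq.2) + C) / (2*C) :=
        exp_affine _ C (2*C) (ne_of_gt h2C)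
      rw [hP_def]
      rw [e1, e2, div_sub_div_same]
      have : (expectation (fun s => F (g x s) pq.1 pq.2) + C)
          - (expectation (fun t => F t pq.1 pq.2) + C)
          = expectation (fun s => F (g x s) pq.1 pq.2) - expectation (fun t => F t pq.1 pq.2) := by
        ring
      rw [this, abs_div, abs_of_pos h2C, div_le_iff₀ h2C]
      constructor <;> intro hh <;> nlinarith
    have heq : (univ.filter fun x : X =>
        |expectation (fun s => f (g x s)) - expectation f| ≤ ε)
        = (univ.filter fun x => P pq x) :=
      Finset.filter_congr (fun x _ => by rw [hiff x])
    rw [heq] at hsamp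
    exact hsamp
  have hub := union_bound δ P hP
  have hcard : (Fintype.card (Fin w × Fin w) : ℝ) = (w:ℝ)^2 := by
    simp [Fintype.card_prod]; ring
  rw [hcard] at hub
  refine le_trans hub ?_
  have hsub : (univ.filter fun x : X => ∀ pq, P pq x) ⊆
      (univ.filter fun x : X =>
        ‖mexpect (fun s => F (g x s)) - mexpect F‖ ≤ 2*C*(w:ℝ)*ε) := by
    intro x hx
    simp only [mem_filter, mem_univ, true_and] at hx ⊢
    have hE : ∀ p q, |(mexpect (fun s => F (g x s)) - mexpect F) p q| ≤ 2*C*ε := by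
      intro p q
      have := hx (p, q)
      rw [hP_def] at this
      rw [Matrix.sub_apply, mexpect_entry, mexpect_entry]
      exact this
    have := norm_le_of_entries (by positivity) hE
    calc ‖mexpect (fun s => F (g x s)) - mexpect F‖ ≤ (w:ℝ) * (2*C*ε) := this
      _ = 2*C*(w:ℝ)*ε := by ring
  exact_mod_cast le_trans (by exact_mod_cast Nat.cast_le.mpr (card_le_card hsub)) le_rfl

end sampler

/-- **core error bound of the main recursive construction.**
Given `γ^(i+1)`-robust approximators `𝒜_i, ℬ_i` (with indexed inner parts `Y i`) of the
two halves `A, B`, norm-bounded by `C(m−1,i)`, and `(ε_i,δ)`-samplers `g_i, h_i` for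
`i ≤ ⌈k/2⌉` with `ε_i ≤ γ^(i+1)/(w·C(m−1,i))` and `δ ≤ γ^(k+1)/(w²·C(2m−1,k))`,
the combination `C_k(x) = Σ_{i+j=k} A_{x,i}B_{x,j} − Σ_{i+j=k−1} A_{x,i}B_{x,j}`
(where `A_{x,i}`, `B_{x,j}` are sampled averages for small `i` and conditional averages
for large `i`) satisfies `E_x ‖C_k(x) − A·B‖ ≤ (33γ)^(k+1)`.
Here `⌈k/2⌉ = (k+1)/2` in natural-number arithmetic. -/
theorem stmt_11 (w m k : ℕ) (hw : 1 ≤ w) (hm : 1 ≤ m) (hk : k < m)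
    (γ : ℝ) (hγ0 : 0 < γ) (hγ1 : γ ≤ 1 / 9)
    (A B : Matrix (Fin w) (Fin w) ℝ) (hA : ‖A‖ ≤ 1) (hB : ‖B‖ ≤ 1)
    (X : Type) [Fintype X] [Nonempty X]
    (Y D D' : ℕ → Type)
    [∀ i, Fintype (Y i)] [∀ i, Nonempty (Y i)]
    [∀ i, Fintype (D i)] [∀ i, Nonempty (D i)]
    [∀ i, Fintype (D' i)] [∀ i, Nonempty (D' i)]
    (𝒜 ℬ : ∀ i : ℕ, X × Y i → Matrix (Fin w) (Fin w) ℝ)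
    (hbdA : ∀ i ≤ k, ∀ p, ‖𝒜 i p‖ ≤ ((m - 1).choose i : ℝ))
    (hbdB : ∀ i ≤ k, ∀ p, ‖ℬ i p‖ ≤ ((m - 1).choose i : ℝ))
    (happroxA : ∀ i ≤ k,
      expectation (fun x : X => ‖mexpect (fun y : Y i => 𝒜 i (x, y)) - A‖) ≤ γ ^ (i + 1))
    (happroxB : ∀ i ≤ k,
      expectation (fun x : X => ‖mexpect (fun y : Y i => ℬ i (x, y)) - B‖) ≤ γ ^ (i + 1))
    (ε : ℕ → ℝ) (δ : ℝ)
    (g : ∀ i : ℕ, X → D i → X × Y i) (h : ∀ i : ℕ, X → D' i → X × Y i)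
    (hg : ∀ i ≤ (k + 1) / 2, IsAvgSampler (ε i) δ (g i))
    (hh : ∀ i ≤ (k + 1) / 2, IsAvgSampler (ε i) δ (h i))
    (hε : ∀ i ≤ (k + 1) / 2, ε i ≤ γ ^ (i + 1) / (w * ((m - 1).choose i : ℝ)))
    (hδ : δ ≤ γ ^ (k + 1) / (w ^ 2 * ((2 * m - 1).choose k : ℝ)))
    (AA BB : ℕ → X → Matrix (Fin w) (Fin w) ℝ)
    (hAA : ∀ i ≤ k, ∀ x : X, AA i x =
      if i ≤ (k + 1) / 2 then mexpect (fun a : D i => 𝒜 i (g i x a))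
      else mexpect (fun y : Y i => 𝒜 i (x, y)))
    (hBB : ∀ j ≤ k, ∀ x : X, BB j x =
      if j ≤ (k + 1) / 2 then mexpect (fun b : D' j => ℬ j (h j x b))
      else mexpect (fun y : Y j => ℬ j (x, y))) :
    expectation (fun x : X =>
        ‖(∑ i ∈ Finset.range (k + 1), AA i x * BB (k - i) x)
            - (∑ i ∈ Finset.range k, AA i x * BB (k - 1 - i) x) - A * B‖)
      ≤ (33 * γ) ^ (k + 1) := by
  classical
  have hw0 : (0:ℝ) < w := by exact_mod_cast hw
  have hγ1' : γ ≤ 1 := le_trans hγ1 (by norm_num)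
  set K : ℝ := ((2 * m - 1).choose k : ℝ) with hK_def
  have hK1 : (1:ℝ) ≤ K := by
    rw [hK_def]; exact_mod_cast Nat.succ_le_of_lt (Nat.choose_pos (by omega))
  have hC1 : ∀ i ≤ k, (1:ℝ) ≤ ((m - 1).choose i : ℝ) := by
    intro i hi
    exact_mod_cast Nat.succ_le_of_lt (Nat.choose_pos (by omega))
  have hCK : ∀ i ≤ k, ((m - 1).choose i : ℝ) ≤ K := by
    intro i hi
    have h1 : (m - 1).choose i ≤ (2 * m - 1).choose i := Nat.choose_le_choose i (by omega)
    have h2 : (2 * m - 1).choose i ≤ (2 * m - 1).choose k :=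
      choose_le_of_le_half hi (by omega)
    rw [hK_def]; exact_mod_cast h1.trans h2
  have hCCK : ∀ i j, i + j ≤ k →
      ((m - 1).choose i : ℝ) * ((m - 1).choose j : ℝ) ≤ K := by
    intro i j hij
    have hv : (m - 1).choose i * (m - 1).choose j ≤ (2 * m - 2).choose (i + j) := by
      have hvd := Nat.add_choose_eq (m - 1) (m - 1) (i + j)
      have hmem : ((i, j) : ℕ × ℕ) ∈ Finset.HasAntidiagonal.antidiagonal (i + j) := by
        simp
      have hle := Finset.single_le_sum
        (f := fun p : ℕ × ℕ => (m - 1).choose p.1 * (m - 1).choose p.2)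
        (fun p _ => Nat.zero_le _) hmem
      rw [show (m - 1) + (m - 1) = 2 * m - 2 by omega] at hvd
      rw [hvd]
      exact hle
    have h2 : (2 * m - 2).choose (i + j) ≤ (2 * m - 1).choose (i + j) :=
      Nat.choose_le_choose _ (by omega)
    have h3 : (2 * m - 1).choose (i + j) ≤ (2 * m - 1).choose k :=
      choose_le_of_le_half hij (by omega)
    rw [hK_def]; exact_mod_cast hv.trans (h2.trans h3)
  have hγk : (0:ℝ) < γ ^ (k + 1) := pow_pos hγ0 _
  have hδw : (w:ℝ)^2 * δ ≤ γ ^ (k + 1) / K := by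
    have hwK : (0:ℝ) < (w:ℝ)^2 * K := by positivity
    have h1 : (w:ℝ)^2 * δ ≤ (w:ℝ)^2 * (γ ^ (k + 1) / ((w:ℝ)^2 * K)) := by
      apply mul_le_mul_of_nonneg_left _ (by positivity)
      have : ((w:ℕ):ℝ)^2 = ((w^2 : ℕ) : ℝ) := by push_cast; ring
      calc δ ≤ γ ^ (k + 1) / (↑w ^ 2 * K) := by exact_mod_cast hδ
        _ = γ ^ (k + 1) / ((w:ℝ)^2 * K) := by norm_cast
    calc (w:ℝ)^2 * δ ≤ (w:ℝ)^2 * (γ ^ (k + 1) / ((w:ℝ)^2 * K)) := h1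
      _ = γ ^ (k + 1) / K := by field_simp
  have hδlt1 : δ < 1 := by
    have h1 : (w:ℝ)^2 * δ ≤ γ ^ (k + 1) / K := hδw
    have h2 : γ ^ (k + 1) / K ≤ γ ^ (k + 1) := by
      apply div_le_self hγk.le hK1
    have h3 : γ ^ (k + 1) ≤ γ := by
      calc γ ^ (k + 1) ≤ γ ^ 1 := pow_le_pow_of_le_one hγ0.le hγ1' (by omega)
        _ = γ := pow_one γ
    have hww : (1:ℝ) ≤ (w:ℝ) := by exact_mod_cast hw
    have hw1 : (1:ℝ) ≤ (w:ℝ)^2 := by nlinarith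
    nlinarith
  -- norm bounds on AA, BB
  have hAAbd : ∀ i ≤ k, ∀ x, ‖AA i x‖ ≤ ((m - 1).choose i : ℝ) := by
    intro i hi x
    rw [hAA i hi x]
    split
    · exact norm_mexpect_le_of_bound (fun a => hbdA i hi _)
    · exact norm_mexpect_le_of_bound (fun y => hbdA i hi _)
  have hBBbd : ∀ j ≤ k, ∀ x, ‖BB j x‖ ≤ ((m - 1).choose j : ℝ) := by
    intro j hj x
    rw [hBB j hj x]
    split
    · exact norm_mexpect_le_of_bound (fun b => hbdB j hj _)
    · exact norm_mexpect_le_of_bound (fun y => hbdB j hj _)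
  have hnaU : ∀ i ≤ k, ∀ x, ‖AA i x - A‖ ≤ 2 * ((m - 1).choose i : ℝ) := by
    intro i hi x
    calc ‖AA i x - A‖ ≤ ‖AA i x‖ + ‖A‖ := norm_sub_le _ _
      _ ≤ ((m - 1).choose i : ℝ) + 1 := add_le_add (hAAbd i hi x) hA
      _ ≤ 2 * ((m - 1).choose i : ℝ) := by linarith [hC1 i hi]
  have hnbU : ∀ j ≤ k, ∀ x, ‖BB j x - B‖ ≤ 2 * ((m - 1).choose j : ℝ) := by
    intro j hj x
    calc ‖BB j x - B‖ ≤ ‖BB j x‖ + ‖B‖ := norm_sub_le _ _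
      _ ≤ ((m - 1).choose j : ℝ) + 1 := add_le_add (hBBbd j hj x) hB
      _ ≤ 2 * ((m - 1).choose j : ℝ) := by linarith [hC1 j hj]
  -- bias bounds
  have hbiasA : ∀ i ≤ k, ‖mexpect (𝒜 i) - A‖ ≤ γ ^ (i + 1) := by
    intro i hi
    rw [mexpect_prod]
    exact (norm_mexpect_sub_le _ _).trans (happroxA i hi)
  have hbiasB : ∀ j ≤ k, ‖mexpect (ℬ j) - B‖ ≤ γ ^ (j + 1) := by
    intro j hj
    rw [mexpect_prod]
    exact (norm_mexpect_sub_le _ _).trans (happroxB j hj)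
  -- good sets
  have hgoodA : ∀ i, i ≤ (k + 1) / 2 → i ≤ k → ∃ G : Finset X,
      (1 - (w:ℝ)^2 * δ) * (Fintype.card X : ℝ) ≤ (G.card : ℝ) ∧
      ∀ x ∈ G, ‖AA i x - A‖ ≤ 3 * γ ^ (i + 1) := by
    intro i hit hik
    have hCpos : (0:ℝ) < ((m - 1).choose i : ℝ) := lt_of_lt_of_le zero_lt_one (hC1 i hik)
    have hε0 : 0 ≤ ε i := sampler_eps_nonneg (hg i hit) hδlt1
    have conc := sampler_conc (ε i) δ ((m - 1).choose i : ℝ) hCpos hε0 (g i) (hg i hit)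
      (𝒜 i) (fun p => hbdA i hik p)
    refine ⟨Finset.univ.filter fun x : X =>
      ‖mexpect (fun s => 𝒜 i (g i x s)) - mexpect (𝒜 i)‖
        ≤ 2 * ((m - 1).choose i : ℝ) * (w:ℝ) * ε i, conc, ?_⟩
    intro x hx
    simp only [Finset.mem_filter, Finset.mem_univ, true_and] at hx
    have hsmall : 2 * ((m - 1).choose i : ℝ) * (w:ℝ) * ε i ≤ 2 * γ ^ (i + 1) := by
      have h1 := hε i hit
      have h2 : (0:ℝ) < (w:ℝ) * ((m - 1).choose i : ℝ) := by positivity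
      have h3 : ε i * ((w:ℝ) * ((m - 1).choose i : ℝ)) ≤ γ ^ (i + 1) :=
        (le_div_iff₀ h2).mp h1
      calc 2 * ((m - 1).choose i : ℝ) * (w:ℝ) * ε i
          = 2 * (ε i * ((w:ℝ) * ((m - 1).choose i : ℝ))) := by ring
        _ ≤ 2 * γ ^ (i + 1) := by linarith
    have hAAi : AA i x = mexpect (fun s => 𝒜 i (g i x s)) := by
      rw [hAA i hik x, if_pos hit]
    calc ‖AA i x - A‖
        ≤ ‖AA i x - mexpect (𝒜 i)‖ + ‖mexpect (𝒜 i) - A‖ := norm_sub_le_norm_sub_add_norm_sub _ _ _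
      _ ≤ 2 * ((m - 1).choose i : ℝ) * (w:ℝ) * ε i + γ ^ (i + 1) := by
          rw [hAAi]; exact add_le_add hx (hbiasA i hik)
      _ ≤ 2 * γ ^ (i + 1) + γ ^ (i + 1) := by linarith
      _ = 3 * γ ^ (i + 1) := by ring
  have hgoodB : ∀ j, j ≤ (k + 1) / 2 → j ≤ k → ∃ G : Finset X,
      (1 - (w:ℝ)^2 * δ) * (Fintype.card X : ℝ) ≤ (G.card : ℝ) ∧
      ∀ x ∈ G, ‖BB j x - B‖ ≤ 3 * γ ^ (j + 1) := by
    intro j hjt hjk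
    have hCpos : (0:ℝ) < ((m - 1).choose j : ℝ) := lt_of_lt_of_le zero_lt_one (hC1 j hjk)
    have hε0 : 0 ≤ ε j := sampler_eps_nonneg (hh j hjt) hδlt1
    have conc := sampler_conc (ε j) δ ((m - 1).choose j : ℝ) hCpos hε0 (h j) (hh j hjt)
      (ℬ j) (fun p => hbdB j hjk p)
    refine ⟨Finset.univ.filter fun x : X =>
      ‖mexpect (fun s => ℬ j (h j x s)) - mexpect (ℬ j)‖
        ≤ 2 * ((m - 1).choose j : ℝ) * (w:ℝ) * ε j, conc, ?_⟩
    intro x hx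
    simp only [Finset.mem_filter, Finset.mem_univ, true_and] at hx
    have hsmall : 2 * ((m - 1).choose j : ℝ) * (w:ℝ) * ε j ≤ 2 * γ ^ (j + 1) := by
      have h1 := hε j hjt
      have h2 : (0:ℝ) < (w:ℝ) * ((m - 1).choose j : ℝ) := by positivity
      have h3 : ε j * ((w:ℝ) * ((m - 1).choose j : ℝ)) ≤ γ ^ (j + 1) :=
        (le_div_iff₀ h2).mp h1
      calc 2 * ((m - 1).choose j : ℝ) * (w:ℝ) * ε j
          = 2 * (ε j * ((w:ℝ) * ((m - 1).choose j : ℝ))) := by ring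
        _ ≤ 2 * γ ^ (j + 1) := by linarith
    have hBBj : BB j x = mexpect (fun s => ℬ j (h j x s)) := by
      rw [hBB j hjk x, if_pos hjt]
    calc ‖BB j x - B‖
        ≤ ‖BB j x - mexpect (ℬ j)‖ + ‖mexpect (ℬ j) - B‖ := norm_sub_le_norm_sub_add_norm_sub _ _ _
      _ ≤ 2 * ((m - 1).choose j : ℝ) * (w:ℝ) * ε j + γ ^ (j + 1) := by
          rw [hBBj]; exact add_le_add hx (hbiasB j hjk)
      _ ≤ 2 * γ ^ (j + 1) + γ ^ (j + 1) := by linarith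
      _ = 3 * γ ^ (j + 1) := by ring
  -- expectation bounds
  have hpow_le : ∀ i ≤ k, γ ^ (k + 1) ≤ γ ^ (i + 1) := by
    intro i hi
    exact pow_le_pow_of_le_one hγ0.le hγ1' (by omega)
  have hEna : ∀ i ≤ k, expectation (fun x : X => ‖AA i x - A‖) ≤ 5 * γ ^ (i + 1) := by
    intro i hik
    by_cases hit : i ≤ (k + 1) / 2
    · obtain ⟨G, hG, hGs⟩ := hgoodA i hit hik
      have hpe := pair_exp (fun x : X => ‖AA i x - A‖) (fun _ => 1)
        (2 * ((m - 1).choose i : ℝ)) 1 (3 * γ ^ (i + 1)) 1 ((w:ℝ)^2 * δ)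
        (fun x => norm_nonneg _) (fun x => zero_le_one)
        (fun x => hnaU i hik x) (fun x => le_rfl)
        (by positivity) (by positivity) zero_le_one
        G hG hGs (le_of_eq (exp_const 1))
      have heq : expectation (fun x : X => ‖AA i x - A‖ * 1)
          = expectation (fun x : X => ‖AA i x - A‖) := by
        congr 1; funext x; rw [mul_one]
      rw [heq] at hpe
      have hbad : (w:ℝ)^2 * δ * (2 * ((m - 1).choose i : ℝ) * 1) ≤ 2 * γ ^ (i + 1) := by
        have h1 : (w:ℝ)^2 * δ * (2 * ((m - 1).choose i : ℝ) * 1)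
            ≤ (γ ^ (k + 1) / K) * (2 * ((m - 1).choose i : ℝ) * 1) := by
          apply mul_le_mul_of_nonneg_right hδw
          have := hC1 i hik; linarith
        have h2 : (γ ^ (k + 1) / K) * (2 * ((m - 1).choose i : ℝ) * 1) ≤ 2 * γ ^ (k + 1) := by
          rw [div_mul_eq_mul_div, div_le_iff₀ (lt_of_lt_of_le zero_lt_one hK1)]
          have := hCK i hik
          nlinarith [hγk]
        have h3 := hpow_le i hik
        linarith
      calc expectation (fun x : X => ‖AA i x - A‖)
          ≤ 3 * γ ^ (i + 1) * 1 + (w:ℝ)^2 * δ * (2 * ((m - 1).choose i : ℝ) * 1) := hpe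
        _ ≤ 3 * γ ^ (i + 1) + 2 * γ ^ (i + 1) := by linarith
        _ = 5 * γ ^ (i + 1) := by ring
    · have heq : (fun x : X => ‖AA i x - A‖)
          = fun x : X => ‖mexpect (fun y : Y i => 𝒜 i (x, y)) - A‖ := by
        funext x; rw [hAA i hik x, if_neg hit]
      rw [heq]
      have := happroxA i hik
      have h5 : γ ^ (i + 1) ≤ 5 * γ ^ (i + 1) := by nlinarith [pow_pos hγ0 (i+1)]
      linarith
  have hEnb : ∀ j ≤ k, expectation (fun x : X => ‖BB j x - B‖) ≤ 5 * γ ^ (j + 1) := by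
    intro j hjk
    by_cases hjt : j ≤ (k + 1) / 2
    · obtain ⟨G, hG, hGs⟩ := hgoodB j hjt hjk
      have hpe := pair_exp (fun x : X => ‖BB j x - B‖) (fun _ => 1)
        (2 * ((m - 1).choose j : ℝ)) 1 (3 * γ ^ (j + 1)) 1 ((w:ℝ)^2 * δ)
        (fun x => norm_nonneg _) (fun x => zero_le_one)
        (fun x => hnbU j hjk x) (fun x => le_rfl)
        (by positivity) (by positivity) zero_le_one
        G hG hGs (le_of_eq (exp_const 1))
      have heq : expectation (fun x : X => ‖BB j x - B‖ * 1)
          = expectation (fun x : X => ‖BB j x - B‖) := by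
        congr 1; funext x; rw [mul_one]
      rw [heq] at hpe
      have hbad : (w:ℝ)^2 * δ * (2 * ((m - 1).choose j : ℝ) * 1) ≤ 2 * γ ^ (j + 1) := by
        have h1 : (w:ℝ)^2 * δ * (2 * ((m - 1).choose j : ℝ) * 1)
            ≤ (γ ^ (k + 1) / K) * (2 * ((m - 1).choose j : ℝ) * 1) := by
          apply mul_le_mul_of_nonneg_right hδw
          have := hC1 j hjk; linarith
        have h2 : (γ ^ (k + 1) / K) * (2 * ((m - 1).choose j : ℝ) * 1) ≤ 2 * γ ^ (k + 1) := by
          rw [div_mul_eq_mul_div, div_le_iff₀ (lt_of_lt_of_le zero_lt_one hK1)]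
          have := hCK j hjk
          nlinarith [hγk]
        have h3 := hpow_le j hjk
        linarith
      calc expectation (fun x : X => ‖BB j x - B‖)
          ≤ 3 * γ ^ (j + 1) * 1 + (w:ℝ)^2 * δ * (2 * ((m - 1).choose j : ℝ) * 1) := hpe
        _ ≤ 3 * γ ^ (j + 1) + 2 * γ ^ (j + 1) := by linarith
        _ = 5 * γ ^ (j + 1) := by ring
    · have heq : (fun x : X => ‖BB j x - B‖)
          = fun x : X => ‖mexpect (fun y : Y j => ℬ j (x, y)) - B‖ := by
        funext x; rw [hBB j hjk x, if_neg hjt]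
      rw [heq]
      have := happroxB j hjk
      have h5 : γ ^ (j + 1) ≤ 5 * γ ^ (j + 1) := by nlinarith [pow_pos hγ0 (j+1)]
      linarith
  -- pair bounds
  have hpair : ∀ i j, i ≤ k → j ≤ k → i + j ≤ k → k ≤ i + j + 1 →
      expectation (fun x : X => ‖AA i x - A‖ * ‖BB j x - B‖) ≤ 19 * γ ^ (k + 1) := by
    intro i j hik hjk hijk hk1
    have hbad : (w:ℝ)^2 * δ * (2 * ((m - 1).choose i : ℝ) * (2 * ((m - 1).choose j : ℝ)))
        ≤ 4 * γ ^ (k + 1) := by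
      have hCC := hCCK i j hijk
      have hCi := hC1 i hik
      have hCj := hC1 j hjk
      have h1 : (w:ℝ)^2 * δ * (2 * ((m - 1).choose i : ℝ) * (2 * ((m - 1).choose j : ℝ)))
          ≤ (γ ^ (k + 1) / K) * (2 * ((m - 1).choose i : ℝ) * (2 * ((m - 1).choose j : ℝ))) := by
        apply mul_le_mul_of_nonneg_right hδw
        nlinarith
      have h2 : (γ ^ (k + 1) / K) * (2 * ((m - 1).choose i : ℝ) * (2 * ((m - 1).choose j : ℝ)))
          ≤ 4 * γ ^ (k + 1) := by
        rw [div_mul_eq_mul_div, div_le_iff₀ (lt_of_lt_of_le zero_lt_one hK1)]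
        nlinarith [hγk]
      linarith
    have hprod : 3 * γ ^ (i + 1) * (5 * γ ^ (j + 1)) ≤ 15 * γ ^ (k + 1) := by
      have : γ ^ (i + 1) * γ ^ (j + 1) = γ ^ (i + j + 2) := by
        rw [← pow_add]; congr 1; omega
      have hle : γ ^ (i + j + 2) ≤ γ ^ (k + 1) :=
        pow_le_pow_of_le_one hγ0.le hγ1' (by omega)
      nlinarith [pow_pos hγ0 (i+1), pow_pos hγ0 (j+1)]
    have hmin : i ≤ (k + 1) / 2 ∨ j ≤ (k + 1) / 2 := by omega
    rcases hmin with hit | hjt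
    · obtain ⟨G, hG, hGs⟩ := hgoodA i hit hik
      have hpe := pair_exp (fun x : X => ‖AA i x - A‖) (fun x : X => ‖BB j x - B‖)
        (2 * ((m - 1).choose i : ℝ)) (2 * ((m - 1).choose j : ℝ))
        (3 * γ ^ (i + 1)) (5 * γ ^ (j + 1)) ((w:ℝ)^2 * δ)
        (fun x => norm_nonneg _) (fun x => norm_nonneg _)
        (fun x => hnaU i hik x) (fun x => hnbU j hjk x)
        (by positivity) (by positivity) (by positivity)
        G hG hGs (hEnb j hjk)
      calc expectation (fun x : X => ‖AA i x - A‖ * ‖BB j x - B‖)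
          ≤ 3 * γ ^ (i + 1) * (5 * γ ^ (j + 1))
            + (w:ℝ)^2 * δ * (2 * ((m - 1).choose i : ℝ) * (2 * ((m - 1).choose j : ℝ))) := hpe
        _ ≤ 15 * γ ^ (k + 1) + 4 * γ ^ (k + 1) := add_le_add hprod hbad
        _ = 19 * γ ^ (k + 1) := by ring
    · obtain ⟨G, hG, hGs⟩ := hgoodB j hjt hjk
      have hpe := pair_exp (fun x : X => ‖BB j x - B‖) (fun x : X => ‖AA i x - A‖)
        (2 * ((m - 1).choose j : ℝ)) (2 * ((m - 1).choose i : ℝ))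
        (3 * γ ^ (j + 1)) (5 * γ ^ (i + 1)) ((w:ℝ)^2 * δ)
        (fun x => norm_nonneg _) (fun x => norm_nonneg _)
        (fun x => hnbU j hjk x) (fun x => hnaU i hik x)
        (by positivity) (by positivity) (by positivity)
        G hG hGs (hEna i hik)
      have heq : expectation (fun x : X => ‖AA i x - A‖ * ‖BB j x - B‖)
          = expectation (fun x : X => ‖BB j x - B‖ * ‖AA i x - A‖) := by
        congr 1; funext x; rw [mul_comm]
      rw [heq]
      have hprod' : 3 * γ ^ (j + 1) * (5 * γ ^ (i + 1)) ≤ 15 * γ ^ (k + 1) := by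
        have : γ ^ (j + 1) * γ ^ (i + 1) = γ ^ (i + j + 2) := by
          rw [← pow_add]; congr 1; omega
        have hle : γ ^ (i + j + 2) ≤ γ ^ (k + 1) :=
          pow_le_pow_of_le_one hγ0.le hγ1' (by omega)
        nlinarith [pow_pos hγ0 (i+1), pow_pos hγ0 (j+1)]
      have hbad' : (w:ℝ)^2 * δ * (2 * ((m - 1).choose j : ℝ) * (2 * ((m - 1).choose i : ℝ)))
          ≤ 4 * γ ^ (k + 1) := by
        calc (w:ℝ)^2 * δ * (2 * ((m - 1).choose j : ℝ) * (2 * ((m - 1).choose i : ℝ)))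
            = (w:ℝ)^2 * δ * (2 * ((m - 1).choose i : ℝ) * (2 * ((m - 1).choose j : ℝ))) := by
              ring
          _ ≤ 4 * γ ^ (k + 1) := hbad
      calc expectation (fun x : X => ‖BB j x - B‖ * ‖AA i x - A‖)
          ≤ 3 * γ ^ (j + 1) * (5 * γ ^ (i + 1))
            + (w:ℝ)^2 * δ * (2 * ((m - 1).choose j : ℝ) * (2 * ((m - 1).choose i : ℝ))) := hpe
        _ ≤ 15 * γ ^ (k + 1) + 4 * γ ^ (k + 1) := add_le_add hprod' hbad'
        _ = 19 * γ ^ (k + 1) := by ring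
  -- algebraic identity
  have expand : ∀ (x : X) (n : ℕ) (f : ℕ → ℕ),
      ∑ i ∈ Finset.range n, (AA i x - A) * (BB (f i) x - B)
      = (∑ i ∈ Finset.range n, AA i x * BB (f i) x)
        - (∑ i ∈ Finset.range n, AA i x) * B
        - A * (∑ i ∈ Finset.range n, BB (f i) x)
        + n • (A * B) := by
    intro x n f
    simp only [sub_mul, mul_sub]
    rw [Finset.sum_sub_distrib, Finset.sum_sub_distrib, Finset.sum_sub_distrib,
      ← Finset.sum_mul, ← Finset.mul_sum, Finset.sum_const, Finset.card_range]
    abel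
  have hid : ∀ x : X,
      (∑ i ∈ Finset.range (k + 1), AA i x * BB (k - i) x)
        - (∑ i ∈ Finset.range k, AA i x * BB (k - 1 - i) x) - A * B
      = A * (BB k x - B) + (AA k x - A) * B
        + (∑ i ∈ Finset.range (k + 1), (AA i x - A) * (BB (k - i) x - B))
        - (∑ i ∈ Finset.range k, (AA i x - A) * (BB (k - 1 - i) x - B)) := by
    intro x
    have e1 := expand x (k + 1) (fun i => k - i)
    have e2 := expand x k (fun i => k - 1 - i)
    have r1 : ∑ i ∈ Finset.range (k + 1), BB (k - i) x
        = ∑ i ∈ Finset.range (k + 1), BB i x := by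
      have := Finset.sum_range_reflect (fun j => BB j x) (k + 1)
      simpa using this
    have r2 : ∑ i ∈ Finset.range k, BB (k - 1 - i) x = ∑ i ∈ Finset.range k, BB i x :=
      Finset.sum_range_reflect (fun j => BB j x) k
    have r3 : ∑ i ∈ Finset.range (k + 1), AA i x = (∑ i ∈ Finset.range k, AA i x) + AA k x :=
      Finset.sum_range_succ _ _
    have r4 : ∑ i ∈ Finset.range (k + 1), BB i x = (∑ i ∈ Finset.range k, BB i x) + BB k x :=
      Finset.sum_range_succ _ _
    rw [e1, e2, r1, r2, r4, r3]
    simp only [mul_add, add_mul, mul_sub, sub_mul, succ_nsmul]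
    abel
  have hpt : ∀ x : X,
      ‖(∑ i ∈ Finset.range (k + 1), AA i x * BB (k - i) x)
        - (∑ i ∈ Finset.range k, AA i x * BB (k - 1 - i) x) - A * B‖
      ≤ ‖BB k x - B‖ + ‖AA k x - A‖
        + ((∑ i ∈ Finset.range (k + 1), ‖AA i x - A‖ * ‖BB (k - i) x - B‖)
          + (∑ i ∈ Finset.range k, ‖AA i x - A‖ * ‖BB (k - 1 - i) x - B‖)) := by
    intro x
    rw [hid x]
    have t1 : ‖A * (BB k x - B)‖ ≤ ‖BB k x - B‖ := by
      calc ‖A * (BB k x - B)‖ ≤ ‖A‖ * ‖BB k x - B‖ := norm_mul_le _ _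
        _ ≤ 1 * ‖BB k x - B‖ := mul_le_mul_of_nonneg_right hA (norm_nonneg _)
        _ = ‖BB k x - B‖ := one_mul _
    have t2 : ‖(AA k x - A) * B‖ ≤ ‖AA k x - A‖ := by
      calc ‖(AA k x - A) * B‖ ≤ ‖AA k x - A‖ * ‖B‖ := norm_mul_le _ _
        _ ≤ ‖AA k x - A‖ * 1 := mul_le_mul_of_nonneg_left hB (norm_nonneg _)
        _ = ‖AA k x - A‖ := mul_one _
    have t3 : ‖∑ i ∈ Finset.range (k + 1), (AA i x - A) * (BB (k - i) x - B)‖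
        ≤ ∑ i ∈ Finset.range (k + 1), ‖AA i x - A‖ * ‖BB (k - i) x - B‖ :=
      (norm_sum_le _ _).trans (Finset.sum_le_sum fun i _ => norm_mul_le _ _)
    have t4 : ‖∑ i ∈ Finset.range k, (AA i x - A) * (BB (k - 1 - i) x - B)‖
        ≤ ∑ i ∈ Finset.range k, ‖AA i x - A‖ * ‖BB (k - 1 - i) x - B‖ :=
      (norm_sum_le _ _).trans (Finset.sum_le_sum fun i _ => norm_mul_le _ _)
    have u1 := norm_sub_le
      (A * (BB k x - B) + (AA k x - A) * B
        + ∑ i ∈ Finset.range (k + 1), (AA i x - A) * (BB (k - i) x - B))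
      (∑ i ∈ Finset.range k, (AA i x - A) * (BB (k - 1 - i) x - B))
    have u2 := norm_add_le
      (A * (BB k x - B) + (AA k x - A) * B)
      (∑ i ∈ Finset.range (k + 1), (AA i x - A) * (BB (k - i) x - B))
    have u3 := norm_add_le (A * (BB k x - B)) ((AA k x - A) * B)
    linarith
  refine le_trans (exp_mono hpt) ?_
  rw [exp_add, exp_add, exp_add, exp_sum, exp_sum]
  have s1 : ∑ i ∈ Finset.range (k + 1),
      expectation (fun x : X => ‖AA i x - A‖ * ‖BB (k - i) x - B‖)
      ≤ (k + 1 : ℝ) * (19 * γ ^ (k + 1)) := by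
    calc ∑ i ∈ Finset.range (k + 1),
        expectation (fun x : X => ‖AA i x - A‖ * ‖BB (k - i) x - B‖)
        ≤ ∑ _i ∈ Finset.range (k + 1), 19 * γ ^ (k + 1) := by
          refine Finset.sum_le_sum fun i hi => ?_
          have hik : i ≤ k := by have := Finset.mem_range.mp hi; omega
          exact hpair i (k - i) hik (by omega) (by omega) (by omega)
      _ = (k + 1 : ℝ) * (19 * γ ^ (k + 1)) := by
          rw [Finset.sum_const, Finset.card_range, nsmul_eq_mul]; push_cast; ring
  have s2 : ∑ i ∈ Finset.range k,
      expectation (fun x : X => ‖AA i x - A‖ * ‖BB (k - 1 - i) x - B‖)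
      ≤ (k : ℝ) * (19 * γ ^ (k + 1)) := by
    calc ∑ i ∈ Finset.range k,
        expectation (fun x : X => ‖AA i x - A‖ * ‖BB (k - 1 - i) x - B‖)
        ≤ ∑ _i ∈ Finset.range k, 19 * γ ^ (k + 1) := by
          refine Finset.sum_le_sum fun i hi => ?_
          have hik : i < k := Finset.mem_range.mp hi
          exact hpair i (k - 1 - i) (by omega) (by omega) (by omega) (by omega)
      _ = (k : ℝ) * (19 * γ ^ (k + 1)) := by
          rw [Finset.sum_const, Finset.card_range, nsmul_eq_mul]
  have e1 := hEnb k le_rfl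
  have e2 := hEna k le_rfl
  have h38 : ((38 * k + 29 : ℕ) : ℝ) ≤ (33 : ℝ) ^ (k + 1) := by
    have := nat38 k
    calc ((38 * k + 29 : ℕ) : ℝ) ≤ ((33 ^ (k + 1) : ℕ) : ℝ) := by exact_mod_cast this
      _ = (33 : ℝ) ^ (k + 1) := by push_cast; ring
  calc expectation (fun x : X => ‖BB k x - B‖) + expectation (fun x : X => ‖AA k x - A‖)
        + ((∑ i ∈ Finset.range (k + 1),
            expectation (fun x : X => ‖AA i x - A‖ * ‖BB (k - i) x - B‖))
          + ∑ i ∈ Finset.range k,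
            expectation (fun x : X => ‖AA i x - A‖ * ‖BB (k - 1 - i) x - B‖))
      ≤ 5 * γ ^ (k + 1) + 5 * γ ^ (k + 1)
        + ((k + 1 : ℝ) * (19 * γ ^ (k + 1)) + (k : ℝ) * (19 * γ ^ (k + 1))) := by
        have := add_le_add (add_le_add e1 e2) (add_le_add s1 s2)
        linarith
    _ = ((38 * (k : ℝ) + 29)) * γ ^ (k + 1) := by ring
    _ ≤ (33 : ℝ) ^ (k + 1) * γ ^ (k + 1) := by
        apply mul_le_mul_of_nonneg_right _ hγk.le
        calc (38 * (k : ℝ) + 29) = ((38 * k + 29 : ℕ) : ℝ) := by push_cast; ring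
          _ ≤ (33 : ℝ) ^ (k + 1) := h38
    _ = (33 * γ) ^ (k + 1) := (mul_pow _ _ _).symm
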